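/- Let N be a positive integer, let ε ∈ (0,1), and let T be a real N×N matrix with |T_{ij}| ≤ ε/N for all indices i, j. Then det(I − T) ≥ 1 − ε > 0, det(I − T/2) > 0, and det(I − T)^{1/4} / det(I − T/2)^{1/2} ≥ 1 − ε. -/

import Mathlib

open Matrix Polynomial

lemma aux_det_ne_zero {N : ℕ} {ε : ℝ} (hε : ε ∈ Set.Ioo (0:ℝ) 1)
    (T : Matrix (Fin N) (Fin N) ℝ) (hT : ∀ i j, |T i j| ≤ ε / N)
    {t : ℝ} (ht : t ∈ Set.Icc (0:ℝ) 1) :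
    (1 - t • T).det ≠ 0 := by
  rcases Nat.eq_zero_or_pos N with h0 | hN
  · subst h0; simp [Matrix.det_fin_zero]
  have hNR : (0:ℝ) < N := by exact_mod_cast hN
  obtain ⟨hε0, hε1⟩ := hε
  obtain ⟨ht0, ht1⟩ := ht
  have htε : t * (ε / N) * N < 1 := by
    have : t * (ε / N) * N = t * ε := by field_simp
    rw [this]
    calc t * ε ≤ 1 * ε := by nlinarith
    _ < 1 := by linarith
  apply det_ne_zero_of_sum_row_lt_diag
  intro k
  have hentry : ∀ j, ‖t • T k j‖ ≤ t * (ε / N) := by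
    intro j
    rw [smul_eq_mul, norm_mul, Real.norm_eq_abs, Real.norm_eq_abs, abs_of_nonneg ht0]
    have := hT k j
    have hεN : 0 ≤ ε / N := by positivity
    nlinarith [abs_nonneg (T k j)]
  have hsum : ∑ j ∈ Finset.univ.erase k, ‖(1 - t • T) k j‖ ≤ (N - 1) * (t * (ε / N)) := by
    have : ∀ j ∈ Finset.univ.erase k, ‖(1 - t • T) k j‖ ≤ t * (ε / N) := by
      intro j hj
      have hjk : j ≠ k := Finset.ne_of_mem_erase hj
      have : (1 - t • T) k j = - (t • T k j) := by
        simp [Matrix.sub_apply, Matrix.one_apply, (Ne.symm hjk), Matrix.smul_apply]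
      rw [this, norm_neg]
      exact hentry j
    calc ∑ j ∈ Finset.univ.erase k, ‖(1 - t • T) k j‖
        ≤ ∑ _j ∈ Finset.univ.erase k, (t * (ε / N)) := Finset.sum_le_sum this
      _ = (Finset.univ.erase k).card * (t * (ε / N)) := by rw [Finset.sum_const, nsmul_eq_mul]
      _ = (N - 1) * (t * (ε / N)) := by
          rw [Finset.card_erase_of_mem (Finset.mem_univ k)]
          simp [Nat.cast_sub hN]
  have hdiag : 1 - t * (ε / N) ≤ ‖(1 - t • T) k k‖ := by
    have : (1 - t • T) k k = 1 - t • T k k := by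
      simp [Matrix.sub_apply, Matrix.one_apply, Matrix.smul_apply]
    rw [this, Real.norm_eq_abs]
    have h1 := hentry k
    rw [Real.norm_eq_abs] at h1
    have := abs_sub_abs_le_abs_sub (1:ℝ) (t • T k k)
    have : |(1:ℝ)| - |t • T k k| ≤ |1 - t • T k k| := by
      have := abs_sub_abs_le_abs_sub (1:ℝ) (t • T k k); simpa using this
    simp only [abs_one] at this
    linarith
  calc ∑ j ∈ Finset.univ.erase k, ‖(1 - t • T) k j‖ ≤ (N - 1) * (t * (ε / N)) := hsum
    _ < 1 - t * (ε / N) := by nlinarith [mul_nonneg (mul_nonneg ht0 (le_of_lt (div_pos hε0 hNR))) hNR.le]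
    _ ≤ ‖(1 - t • T) k k‖ := hdiag

lemma aux_trace_bound {N : ℕ} (hN : 0 < N) {ε : ℝ} (hε : ε ∈ Set.Ioo (0:ℝ) 1)
    (T : Matrix (Fin N) (Fin N) ℝ) (hT : ∀ i j, |T i j| ≤ ε / N)
    {t : ℝ} (ht : t ∈ Set.Icc (0:ℝ) 1)
    (hdet : (1 - t • T).det ≠ 0) :
    |((1 - t • T)⁻¹ * T).trace| ≤ ε / (1 - t * ε) := by
  obtain ⟨hε0, hε1⟩ := hε
  obtain ⟨ht0, ht1⟩ := ht
  have hNR : (0:ℝ) < N := by exact_mod_cast hN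
  have htε : t * ε < 1 := by nlinarith
  set S := (1 - t • T)⁻¹ * T with hS
  -- S = T + t • (T * S)
  have hAS : (1 - t • T) * S = T := by
    rw [hS, ← Matrix.mul_assoc, Matrix.mul_nonsing_inv _ (isUnit_iff_ne_zero.mpr hdet), Matrix.one_mul]
  have hfix : S = T + t • (T * S) := by
    have h1 : (1 - t • T) * S = S - t • (T * S) := by
      rw [Matrix.sub_mul, Matrix.one_mul, Matrix.smul_mul]
    have h2 : S - t • (T * S) = T := by rw [← h1]; exact hAS
    exact sub_eq_iff_eq_add.mp h2
  -- sup of entries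
  have hne : (Finset.univ : Finset (Fin N × Fin N)).Nonempty := by
    refine ⟨(⟨0, hN⟩, ⟨0, hN⟩), Finset.mem_univ _⟩
  set m := Finset.univ.sup' hne (fun p : Fin N × Fin N => |S p.1 p.2|) with hm
  have hmem : ∀ i j, |S i j| ≤ m := fun i j =>
    Finset.le_sup' (f := fun p : Fin N × Fin N => |S p.1 p.2|) (Finset.mem_univ (i, j))
  have hm0 : 0 ≤ m := le_trans (abs_nonneg _) (hmem ⟨0, hN⟩ ⟨0, hN⟩)
  have hkey : m ≤ ε / N + t * ε * m := by
    rw [hm]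
    apply Finset.sup'_le
    intro p _
    have : S p.1 p.2 = T p.1 p.2 + t * (T * S) p.1 p.2 := by
      conv_lhs => rw [hfix]
      simp [Matrix.add_apply, Matrix.smul_apply]
    rw [this]
    calc |T p.1 p.2 + t * (T * S) p.1 p.2| ≤ |T p.1 p.2| + |t * (T * S) p.1 p.2| := abs_add_le _ _
      _ ≤ ε / N + t * ε * m := by
          have h2 : |(T * S) p.1 p.2| ≤ ε * m := by
            rw [Matrix.mul_apply]
            calc |∑ l, T p.1 l * S l p.2| ≤ ∑ l, |T p.1 l * S l p.2| := Finset.abs_sum_le_sum_abs _ _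
              _ ≤ ∑ _l : Fin N, (ε / N * m) := by
                  apply Finset.sum_le_sum
                  intro l _
                  rw [abs_mul]
                  exact mul_le_mul (hT _ _) (hmem _ _) (abs_nonneg _) (by positivity)
              _ = ε * m := by
                  rw [Finset.sum_const, nsmul_eq_mul, Finset.card_univ, Fintype.card_fin]
                  field_simp
          have := hT p.1 p.2
          rw [abs_mul, abs_of_nonneg ht0]
          nlinarith [abs_nonneg ((T*S) p.1 p.2)]
  have hmb : m ≤ (ε / N) / (1 - t * ε) := by
    rw [le_div_iff₀ (by linarith)]
    nlinarith
  calc |S.trace| ≤ ∑ i, |S i i| := by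
        rw [Matrix.trace]; exact Finset.abs_sum_le_sum_abs _ _
    _ ≤ ∑ _i : Fin N, (ε / N) / (1 - t * ε) := Finset.sum_le_sum fun i _ => le_trans (hmem i i) hmb
    _ = ε / (1 - t * ε) := by
        rw [Finset.sum_const, nsmul_eq_mul, Finset.card_univ, Fintype.card_fin]
        field_simp

lemma aux_deriv {N : ℕ} (T : Matrix (Fin N) (Fin N) ℝ) {t₀ : ℝ}
    (hdet : (1 - t₀ • T).det ≠ 0) :
    HasDerivAt (fun t : ℝ => (1 - t • T).det)
      (-((1 - t₀ • T).det * ((1 - t₀ • T)⁻¹ * T).trace)) t₀ := by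
  set A := 1 - t₀ • T with hA
  set S := A⁻¹ * T with hS
  have hAS : A * S = T := by
    rw [hS, ← Matrix.mul_assoc, Matrix.mul_nonsing_inv _ (isUnit_iff_ne_zero.mpr hdet),
      Matrix.one_mul]
  have hfact : ∀ t : ℝ, 1 - t • T = A * (1 - (t - t₀) • S) := by
    intro t
    rw [Matrix.mul_sub, Matrix.mul_one, Matrix.mul_smul, hAS, hA]
    rw [sub_sub, ← add_smul]
    ring_nf
  set P : Polynomial ℝ := (1 + (X : ℝ[X]) • ((-S).map C)).det with hP
  have hPeval : ∀ h : ℝ, P.eval h = (1 - h • S).det := by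
    intro h
    have : eval h P = ((evalRingHom h).mapMatrix (1 + (X : ℝ[X]) • ((-S).map C))).det := by
      rw [hP, ← RingHom.map_det]; rfl
    rw [this]
    congr 1
    ext i j
    rw [RingHom.mapMatrix_apply, Matrix.map_apply, Matrix.add_apply, Matrix.smul_apply,
      Matrix.map_apply, Matrix.sub_apply, Matrix.smul_apply, Matrix.neg_apply]
    by_cases hij : i = j
    · subst hij
      simp [Matrix.one_apply, smul_eq_mul]
      ring
    · simp [Matrix.one_apply, hij, smul_eq_mul]
      ring
  have hder0 : eval 0 (derivative P) = -S.trace := by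
    rw [hP, Matrix.derivative_det_one_add_X_smul, Matrix.trace_neg]
  -- function equality
  have hfun : (fun t : ℝ => (1 - t • T).det) = fun t : ℝ => A.det * P.eval (t - t₀) := by
    funext t
    rw [hfact t, Matrix.det_mul, hPeval]
  rw [hfun]
  have h1 : HasDerivAt (fun t : ℝ => t - t₀) 1 t₀ := (hasDerivAt_id t₀).sub_const t₀
  have h2 : HasDerivAt (fun t : ℝ => P.eval (t - t₀)) (eval 0 (derivative P) * 1) t₀ := by
    have hg : HasDerivAt (fun x : ℝ => P.eval x) (eval 0 (derivative P)) (t₀ - t₀) := by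
      simpa using Polynomial.hasDerivAt P 0
    have := HasDerivAt.comp_sub_const (f := fun x : ℝ => P.eval x) t₀ t₀ hg
    simpa using this
  have h3 := h2.const_mul A.det
  refine h3.congr_deriv ?_
  rw [hder0]
  ring

lemma aux_main {N : ℕ} (hN : 0 < N) {ε : ℝ} (hε : ε ∈ Set.Ioo (0:ℝ) 1)
    (T : Matrix (Fin N) (Fin N) ℝ) (hT : ∀ i j, |T i j| ≤ ε / N)
    {s : ℝ} (hs : s ∈ Set.Icc (0:ℝ) 1) :
    1 - s * ε ≤ (1 - s • T).det ∧ (1 - s • T).det ≤ (1 - s * ε)⁻¹ := by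
  obtain ⟨hε0, hε1⟩ := hε
  set p : ℝ → ℝ := fun t => (1 - t • T).det with hp
  have hdet : ∀ t ∈ Set.Icc (0:ℝ) 1, p t ≠ 0 := fun t ht => aux_det_ne_zero ⟨hε0, hε1⟩ T hT ht
  have hlin : ∀ t ∈ Set.Icc (0:ℝ) 1, 0 < 1 - t * ε := by
    intro t ht
    obtain ⟨ht0, ht1⟩ := ht
    nlinarith
  have hds : ∀ t ∈ Set.Icc (0:ℝ) 1,
      HasDerivAt p (-(p t * ((1 - t • T)⁻¹ * T).trace)) t :=
    fun t ht => aux_deriv T (hdet t ht)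
  have htr : ∀ t ∈ Set.Icc (0:ℝ) 1, |((1 - t • T)⁻¹ * T).trace| ≤ ε / (1 - t * ε) :=
    fun t ht => aux_trace_bound hN ⟨hε0, hε1⟩ T hT ht (hdet t ht)
  have hcont : ContinuousOn p (Set.Icc (0:ℝ) 1) :=
    fun t ht => ((hds t ht).continuousAt).continuousWithinAt
  have hp0 : p 0 = 1 := by simp [hp]
  have hpos : ∀ t ∈ Set.Icc (0:ℝ) 1, 0 < p t := by
    intro t ht
    rcases lt_or_gt_of_ne (hdet t ht) with hneg | hposi
    · exfalso
      obtain ⟨ht0, ht1⟩ := ht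
      have hsub : Set.Icc (0:ℝ) t ⊆ Set.Icc (0:ℝ) 1 := Set.Icc_subset_Icc le_rfl ht1
      have := intermediate_value_Icc' ht0 (hcont.mono hsub)
      have h0mem : (0:ℝ) ∈ Set.Icc (p t) (p 0) := by
        rw [hp0]; exact ⟨le_of_lt hneg, zero_le_one⟩
      obtain ⟨s₀, hs₀, hps₀⟩ := this h0mem
      exact hdet s₀ (hsub hs₀) hps₀
    · exact hposi
  -- derivative of log-comparison functions
  have hlogder : ∀ t ∈ Set.Ioo (0:ℝ) 1,
      HasDerivAt (fun x => Real.log (p x)) (-((1 - t • T)⁻¹ * T).trace) t := by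
    intro t ht
    have ht' : t ∈ Set.Icc (0:ℝ) 1 := Set.mem_Icc_of_Ioo ht
    have h1 := (hds t ht').log (hdet t ht')
    have : -(p t * ((1 - t • T)⁻¹ * T).trace) / p t = -((1 - t • T)⁻¹ * T).trace := by
      rw [neg_div, mul_comm, mul_div_assoc, div_self (hdet t ht'), mul_one]
    rwa [this] at h1
  have hlogden : ∀ t : ℝ, t ∈ Set.Icc (0:ℝ) 1 →
      HasDerivAt (fun x : ℝ => Real.log (1 - x * ε)) (-ε / (1 - t * ε)) t := by
    intro t ht
    have h2 : HasDerivAt (fun x : ℝ => 1 - x * ε) (-ε) t := by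
      simpa using ((hasDerivAt_id t).mul_const ε).const_sub 1
    have := h2.log (ne_of_gt (hlin t ht))
    simpa using this
  have hIcc : interior (Set.Icc (0:ℝ) 1) = Set.Ioo (0:ℝ) 1 := interior_Icc
  have hcontu : ContinuousOn (fun x => Real.log (p x)) (Set.Icc (0:ℝ) 1) :=
    hcont.log hdet
  have hcontl : ContinuousOn (fun x : ℝ => Real.log (1 - x * ε)) (Set.Icc (0:ℝ) 1) := by
    apply ContinuousOn.log
    · exact (continuous_const.sub (continuous_id.mul continuous_const)).continuousOn
    · exact fun t ht => ne_of_gt (hlin t ht)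
  -- monotone part
  have hu : MonotoneOn (fun t => Real.log (p t) - Real.log (1 - t * ε)) (Set.Icc (0:ℝ) 1) := by
    apply monotoneOn_of_deriv_nonneg (convex_Icc 0 1) (hcontu.sub hcontl)
    · rw [hIcc]
      intro t ht
      exact ((hlogder t ht).sub (hlogden t (Set.mem_Icc_of_Ioo ht))).differentiableAt.differentiableWithinAt
    · rw [hIcc]
      intro t ht
      have hd := (hlogder t ht).sub (hlogden t (Set.mem_Icc_of_Ioo ht))
      rw [hd.deriv]
      have h3 := htr t (Set.mem_Icc_of_Ioo ht)
      have h4 := hlin t (Set.mem_Icc_of_Ioo ht)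
      have := abs_le.mp h3
      have h5 : -ε / (1 - t * ε) = -(ε / (1 - t * ε)) := by ring
      rw [h5]
      linarith [this.1]
  have hv : AntitoneOn (fun t => Real.log (p t) + Real.log (1 - t * ε)) (Set.Icc (0:ℝ) 1) := by
    apply antitoneOn_of_deriv_nonpos (convex_Icc 0 1) (hcontu.add hcontl)
    · rw [hIcc]
      intro t ht
      exact ((hlogder t ht).add (hlogden t (Set.mem_Icc_of_Ioo ht))).differentiableAt.differentiableWithinAt
    · rw [hIcc]
      intro t ht
      have hd := (hlogder t ht).add (hlogden t (Set.mem_Icc_of_Ioo ht))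
      rw [hd.deriv]
      have h3 := htr t (Set.mem_Icc_of_Ioo ht)
      have h4 := hlin t (Set.mem_Icc_of_Ioo ht)
      have := abs_le.mp h3
      have h5 : -ε / (1 - t * ε) = -(ε / (1 - t * ε)) := by ring
      rw [h5]
      linarith [this.2]
  have h0mem : (0:ℝ) ∈ Set.Icc (0:ℝ) 1 := by constructor <;> norm_num
  have hps := hpos s hs
  have hlins := hlin s hs
  constructor
  · have := hu h0mem hs hs.1
    simp [hp0] at this
    have hlog : Real.log (1 - s * ε) ≤ Real.log (p s) := by linarith
    exact (Real.log_le_log_iff hlins hps).mp hlog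
  · have := hv h0mem hs hs.1
    simp [hp0] at this
    have hlog : Real.log (p s) ≤ Real.log (1 - s * ε)⁻¹ := by
      rw [Real.log_inv]; linarith
    exact (Real.log_le_log_iff hps (by positivity)).mp hlog

/-- Fidelity bound between Gaussian states with inverse-covariance matrices
A and A(I − T), for T entrywise bounded by ε/N. -/
theorem det_ratio_fidelity_bound
    (N : ℕ) (hN : 0 < N) (ε : ℝ) (hε : ε ∈ Set.Ioo (0:ℝ) 1)
    (T : Matrix (Fin N) (Fin N) ℝ) (hT : ∀ i j, |T i j| ≤ ε / N) :
    1 - ε ≤ (1 - T).det ∧ 0 < (1 - T).det ∧ 0 < (1 - (2:ℝ)⁻¹ • T).det ∧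
      1 - ε ≤ (1 - T).det ^ ((1:ℝ)/4) / (1 - (2:ℝ)⁻¹ • T).det ^ ((1:ℝ)/2) := by
  obtain ⟨hε0, hε1⟩ := hε
  have h1mem : (1:ℝ) ∈ Set.Icc (0:ℝ) 1 := by constructor <;> norm_num
  have hhalf : (2:ℝ)⁻¹ ∈ Set.Icc (0:ℝ) 1 := by constructor <;> norm_num
  have h1 := aux_main hN ⟨hε0, hε1⟩ T hT h1mem
  have h2 := aux_main hN ⟨hε0, hε1⟩ T hT hhalf
  rw [one_smul] at h1
  rw [one_mul] at h1
  have ha : 1 - ε ≤ (1 - T).det := h1.1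
  have hapos : 0 < (1 - T).det := lt_of_lt_of_le (by linarith) ha
  have hbl : 1 - (2:ℝ)⁻¹ * ε ≤ (1 - (2:ℝ)⁻¹ • T).det := h2.1
  have hbu : (1 - (2:ℝ)⁻¹ • T).det ≤ (1 - (2:ℝ)⁻¹ * ε)⁻¹ := h2.2
  have hhε : (0:ℝ) < 1 - (2:ℝ)⁻¹ * ε := by linarith
  have hbpos : 0 < (1 - (2:ℝ)⁻¹ • T).det := lt_of_lt_of_le hhε hbl
  refine ⟨ha, hapos, hbpos, ?_⟩
  set a := (1 - T).det
  set b := (1 - (2:ℝ)⁻¹ • T).det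
  have h1ε : (0:ℝ) < 1 - ε := by linarith
  have step1 : (1 - ε) ^ ((1:ℝ)/4) ≤ a ^ ((1:ℝ)/4) :=
    Real.rpow_le_rpow h1ε.le ha (by norm_num)
  have step2 : b ^ ((1:ℝ)/2) ≤ ((1 - (2:ℝ)⁻¹ * ε)⁻¹) ^ ((1:ℝ)/2) :=
    Real.rpow_le_rpow hbpos.le hbu (by norm_num)
  have hbr : (0:ℝ) < b ^ ((1:ℝ)/2) := Real.rpow_pos_of_pos hbpos _
  have step3 : (1 - ε) ^ ((1:ℝ)/4) / ((1 - (2:ℝ)⁻¹ * ε)⁻¹) ^ ((1:ℝ)/2)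
      ≤ a ^ ((1:ℝ)/4) / b ^ ((1:ℝ)/2) :=
    div_le_div₀ (Real.rpow_nonneg hapos.le _) step1 hbr step2
  have hrw : ((1 - (2:ℝ)⁻¹ * ε)⁻¹) ^ ((1:ℝ)/2) = ((1 - (2:ℝ)⁻¹ * ε) ^ ((1:ℝ)/2))⁻¹ :=
    Real.inv_rpow hhε.le _
  rw [hrw, div_inv_eq_mul] at step3
  have step4 : (1 - ε) ^ ((1:ℝ)/2) ≤ (1 - (2:ℝ)⁻¹ * ε) ^ ((1:ℝ)/2) :=
    Real.rpow_le_rpow h1ε.le (by linarith) (by norm_num)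
  have step5 : (1 - ε) ^ ((1:ℝ)/4) * (1 - ε) ^ ((1:ℝ)/2)
      ≤ (1 - ε) ^ ((1:ℝ)/4) * (1 - (2:ℝ)⁻¹ * ε) ^ ((1:ℝ)/2) :=
    mul_le_mul_of_nonneg_left step4 (Real.rpow_nonneg h1ε.le _)
  have step6 : (1 - ε) ^ ((1:ℝ)/4) * (1 - ε) ^ ((1:ℝ)/2) = (1 - ε) ^ ((3:ℝ)/4) := by
    rw [← Real.rpow_add h1ε]
    norm_num
  have step7 : 1 - ε ≤ (1 - ε) ^ ((3:ℝ)/4) := by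
    have := Real.rpow_le_rpow_of_exponent_ge h1ε (by linarith) (by norm_num : (3:ℝ)/4 ≤ 1)
    rwa [Real.rpow_one] at this
  linarith
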